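/- arXiv:1812.03162 — 2 statements merged into one kernel-verified Lean document; each statement's English description precedes it below -/
import Mathlib

section
/- For n ≥ 1, the partition p' = ((2n+1), (2n−1), 1, 1, 1) strictly dominates p = ((2n), (2n), 1, 1, 1) in the dominance order on partitions of 4n+3, and moreover p' is the smallest special orthogonal partition of 4n+3 dominating p: any special orthogonal partition q of 4n+3 with q ≥ p in the dominance order satisfies q ≥ p'. -/
/-- A partition (list of parts) is orthogonal if every even part occurs with
even multiplicity. -/
def IsOrthogonalPartition (p : List ℕ) : Prop :=
  ∀ k : ℕ, Even k → Even (p.count k)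

/-- An orthogonal partition is special if (i) between any two consecutive even
parts there is an even number of odd parts, and (ii) the number of odd parts
greater than the largest even part is odd; if there are no even parts, the
total number of (odd) parts must be odd. -/
def IsSpecialOrthogonalPartition (p : List ℕ) : Prop :=
  IsOrthogonalPartition p ∧
  (∀ a b : ℕ, a ∈ p → b ∈ p → Even a → Even b → b < a →
    (∀ c ∈ p, Even c → ¬(b < c ∧ c < a)) →
    Even (p.countP (fun m => decide (Odd m ∧ b < m ∧ m < a)))) ∧
  (∀ a : ℕ, a ∈ p → Even a → (∀ c ∈ p, Even c → c ≤ a) →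
    Odd (p.countP (fun m => decide (Odd m ∧ a < m)))) ∧
  ((∀ a ∈ p, Odd a) → Odd p.length)

/-- Dominance order: `Dominates q p` means every partial sum of `p` is bounded
by the corresponding partial sum of `q` (i.e. `p ≤ q`). -/
def Dominates (q p : List ℕ) : Prop :=
  ∀ k : ℕ, (p.take k).sum ≤ (q.take k).sum

/-- For `n ≥ 1`, `p' = ((2n+1), (2n−1), 1, 1, 1)` strictly
dominates `p = ((2n), (2n), 1, 1, 1)` in the dominance order on partitions of
`4n+3`, and `p'` is the smallest special orthogonal partition of `4n+3`
dominating `p`. -/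
theorem stmt5 (n : ℕ) (hn : 1 ≤ n) :
    Dominates [2 * n + 1, 2 * n - 1, 1, 1, 1] [2 * n, 2 * n, 1, 1, 1] ∧
    [2 * n + 1, 2 * n - 1, 1, 1, 1] ≠ [2 * n, 2 * n, 1, 1, 1] ∧
    (∀ q : List ℕ, q.Pairwise (· ≥ ·) → (∀ a ∈ q, 0 < a) → q.sum = 4 * n + 3 →
      IsSpecialOrthogonalPartition q →
      Dominates q [2 * n, 2 * n, 1, 1, 1] →
      Dominates q [2 * n + 1, 2 * n - 1, 1, 1, 1]) := by
  refine ⟨?_, ?_, ?_⟩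
  · intro k
    match k with
    | 0 => simp
    | 1 => simp
    | 2 => simp [List.take]; omega
    | 3 => simp [List.take]; omega
    | 4 => simp [List.take]; omega
    | (k+5) => simp [List.take]; omega
  · intro h
    simp only [List.cons.injEq] at h
    omega
  · intro q hsort hpos hsum hspec hdom
    -- key: head of q is at least 2n+1
    have hne : q ≠ [] := by
      intro h; rw [h] at hsum; simp at hsum
    obtain ⟨a, t, rfl⟩ := List.exists_cons_of_ne_nil hne
    have hle : ∀ b ∈ t, b ≤ a := (List.pairwise_cons.mp hsort).1
    have hall : ∀ m ∈ a :: t, m ≤ a := by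
      intro m hm
      rcases List.mem_cons.mp hm with h | h
      · omega
      · exact hle m h
    have h1 : 2 * n ≤ a := by
      have := hdom 1
      simpa using this
    have hkey : 2 * n + 1 ≤ a := by
      by_contra hcon
      have ha : a = 2 * n := by omega
      have h3 := hspec.2.2.1 a List.mem_cons_self (by rw [ha]; exact even_two_mul n)
        (fun c hc _ => hall c hc)
      have h0 : (a :: t).countP (fun m => decide (Odd m ∧ a < m)) = 0 := by
        apply List.countP_eq_zero.mpr
        intro m hm
        simp only [decide_eq_true_eq, not_and]
        intro _
        exact not_lt.mpr (hall m hm)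
      rw [h0] at h3
      exact (Nat.not_odd_iff_even.mpr Even.zero) h3
    intro k
    match k with
    | 0 => simp
    | 1 => simpa using hkey
    | 2 =>
      have := hdom 2
      simp [List.take] at this ⊢
      omega
    | 3 =>
      have := hdom 3
      simp [List.take] at this ⊢
      omega
    | 4 =>
      have := hdom 4
      simp [List.take] at this ⊢
      omega
    | (k+5) =>
      have := hdom (k+5)
      simp [List.take] at this ⊢
      omega
end

section
/- Let g be a finite-dimensional Lie algebra over a field of characteristic zero with invariant symmetric bilinear form κ, s ∈ g ad-diagonalizable with rational eigenvalues, u ∈ g^s_{−2}, and let n = g^s_{≥2} + (g^s_1 ∩ g_u). Then the linear functional ℓ_u : n → F given by ℓ_u(x) = κ(u, x) vanishes on [n, n]; i.e., ℓ_u is a Lie algebra character of the nilpotent Lie algebra n. -/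
/-- The `r`-eigenspace `g^s_r` of `ad(s)` on a Lie algebra. -/
def adEigenspace (F : Type*) [Field F] (L : Type*) [LieRing L] [LieAlgebra F L]
    (s : L) (r : F) : Submodule F L :=
  Module.End.eigenspace (LieAlgebra.ad F L s) r

section aux
variable {F : Type*} [Field F] {L : Type*} [LieRing L] [LieAlgebra F L]

lemma mem_adE_iff {s x : L} {r : F} : x ∈ adEigenspace F L s r ↔ ⁅s, x⁆ = r • x := by
  rw [adEigenspace, Module.End.mem_eigenspace_iff, LieAlgebra.ad_apply]

lemma bracket_mem {s x y : L} {a b : F} (hx : x ∈ adEigenspace F L s a)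
    (hy : y ∈ adEigenspace F L s b) : ⁅x, y⁆ ∈ adEigenspace F L s (a + b) := by
  rw [mem_adE_iff] at *
  rw [leibniz_lie, hx, hy, smul_lie, lie_smul, add_smul]

lemma orth (κ : LinearMap.BilinForm F L)
    (hinv : ∀ x y z : L, κ ⁅x, y⁆ z = κ x ⁅y, z⁆)
    {s x y : L} {a b : F} (hab : a + b ≠ 0)
    (hx : x ∈ adEigenspace F L s a) (hy : y ∈ adEigenspace F L s b) :
    κ x y = 0 := by
  rw [mem_adE_iff] at hx hy
  have hxs : ⁅x, s⁆ = -(a • x) := by rw [← lie_skew, hx]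
  have h := hinv x s y
  rw [hy, hxs] at h
  simp only [map_neg, map_smul, LinearMap.neg_apply, LinearMap.smul_apply, smul_eq_mul] at h
  have h2 : (a + b) * κ x y = 0 := by linear_combination -h
  exact (mul_eq_zero.mp h2).resolve_left hab

end aux

/-- With `κ` an invariant symmetric bilinear form, `s ∈ g`
ad-diagonalizable with rational eigenvalues, `u ∈ g^s_{−2}` and
`n = g^s_{≥2} + (g^s_1 ∩ g_u)`, the functional `ℓ_u(x) = κ(u,x)` vanishes on
`[n, n]`; i.e. `ℓ_u` is a Lie algebra character of `n`. -/
theorem stmt11 (F : Type*) [Field F] [CharZero F]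
    (L : Type*) [LieRing L] [LieAlgebra F L] [FiniteDimensional F L]
    (κ : LinearMap.BilinForm F L)
    (hsymm : ∀ x y : L, κ x y = κ y x)
    (hinv : ∀ x y z : L, κ ⁅x, y⁆ z = κ x ⁅y, z⁆)
    (s u : L) (hu : u ∈ adEigenspace F L s (((-2 : ℚ) : F))) :
    ∀ X ∈ (⨆ r : {r : ℚ // 2 ≤ r}, adEigenspace F L s (((r : ℚ) : F))) ⊔
        (adEigenspace F L s (((1 : ℚ) : F)) ⊓
          LinearMap.ker (LieAlgebra.ad F L u)),
      ∀ Y ∈ (⨆ r : {r : ℚ // 2 ≤ r}, adEigenspace F L s (((r : ℚ) : F))) ⊔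
        (adEigenspace F L s (((1 : ℚ) : F)) ⊓
          LinearMap.ker (LieAlgebra.ad F L u)),
        κ u ⁅X, Y⁆ = 0 := by
  intro X hX Y hY
  set P : Submodule F L := ⨆ r : {r : ℚ // 0 ≤ r}, adEigenspace F L s (((r : ℚ) : F)) with hP
  have hclaim1 : ⁅u, X⁆ ∈ P := by
    rcases Submodule.mem_sup.mp hX with ⟨p, hp, q, hq, rfl⟩
    rw [lie_add]
    refine add_mem ?_ ?_
    · refine Submodule.iSup_induction _ (motive := fun x => ⁅u, x⁆ ∈ P) hp ?_ (by simp) ?_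
      · rintro ⟨r, hr⟩ x hx
        have hb := bracket_mem hu hx
        rw [show ((-2 : ℚ) : F) + ((r : ℚ) : F) = (((r - 2 : ℚ)) : F) by push_cast; ring] at hb
        exact Submodule.mem_iSup_of_mem ⟨r - 2, by linarith⟩ hb
      · intro x y hx hy; rw [lie_add]; exact add_mem hx hy
    · have hz : ⁅u, q⁆ = 0 := by
        simpa [LieAlgebra.ad_apply] using LinearMap.mem_ker.mp hq.2
      rw [hz]; exact zero_mem _
  have hclaim2 : ∀ z ∈ P, κ z Y = 0 := by
    have hgen : ∀ (a : ℚ), 0 ≤ a → ∀ z ∈ adEigenspace F L s ((a : F)), κ z Y = 0 := by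
      intro a ha z hz
      rcases Submodule.mem_sup.mp hY with ⟨p, hp, q, hq, rfl⟩
      rw [map_add]
      have h1 : κ z p = 0 := by
        refine Submodule.iSup_induction _ (motive := fun y => κ z y = 0) hp ?_ (map_zero _) ?_
        · rintro ⟨r, hr⟩ y hy
          refine orth κ hinv ?_ hz hy
          rw [show ((a : F) + ((r : ℚ) : F)) = (((a + r : ℚ)) : F) by push_cast; ring]
          exact Rat.cast_ne_zero.mpr (by linarith)
        · intro x y hx hy; rw [map_add, hx, hy, add_zero]
      have h2 : κ z q = 0 := by
        refine orth κ hinv ?_ hz hq.1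
        rw [show ((a : F) + ((1 : ℚ) : F)) = (((a + 1 : ℚ)) : F) by push_cast; ring]
        exact Rat.cast_ne_zero.mpr (by linarith)
      rw [h1, h2, add_zero]
    refine fun z hz => Submodule.iSup_induction _ (motive := fun z => κ z Y = 0) hz ?_ ?_ ?_
    · rintro ⟨a, ha⟩ z hz; exact hgen a ha z hz
    · simp
    · intro x y hx hy; simp [map_add, hx, hy]
  calc κ u ⁅X, Y⁆ = κ ⁅u, X⁆ Y := (hinv u X Y).symm
    _ = 0 := hclaim2 _ hclaim1
end
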